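/- For every k ≥ 1, both K_k and K̂_k are solvable of derived length at most k: the k-th term of the derived series of K_k is trivial, and the k-th term of the derived series of K̂_k is trivial. -/

import Mathlib

/-- The generator `g_i` acting on `(Fin k → R)`: it adds the `i`-th standard basis
vector `e_i` to `v` when `v j = 0` for all `j < i`, and fixes `v` otherwise. -/
def kGen (R : Type*) [AddGroup R] [One R] [DecidableEq R] (k : ℕ) (i : Fin k) :
    Equiv.Perm (Fin k → R) where
  toFun v := if ∀ j, j < i → v j = 0 then (fun j => v j + if j = i then 1 else 0) else v
  invFun v := if ∀ j, j < i → v j = 0 then (fun j => v j - if j = i then 1 else 0) else v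
  left_inv v := by
    by_cases h : ∀ j, j < i → v j = 0
    · have h' : ∀ j, j < i → v j + (if j = i then 1 else 0) = 0 := fun j hj => by
        rw [if_neg (Fin.ne_of_lt hj), add_zero]; exact h j hj
      simp only [if_pos h, if_pos h']
      funext j; exact add_sub_cancel_right _ _
    · simp only [if_neg h]
  right_inv v := by
    by_cases h : ∀ j, j < i → v j = 0
    · have h' : ∀ j, j < i → v j - (if j = i then 1 else 0) = 0 := fun j hj => by
        rw [if_neg (Fin.ne_of_lt hj), sub_zero]; exact h j hj
      simp only [if_pos h, if_pos h']
      funext j; exact sub_add_cancel _ _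
    · simp only [if_neg h]

/-- `K_k`: the subgroup of `Perm(ℤ^k)` generated by `g_1, …, g_k`. -/
def Kk (k : ℕ) : Subgroup (Equiv.Perm (Fin k → ℤ)) :=
  Subgroup.closure (Set.range (kGen ℤ k))

/-- `K_k^n`: the subgroup of `Perm((ℤ/nℤ)^k)` generated by `g_1^{(n)}, …, g_k^{(n)}`. -/
def KkMod (k n : ℕ) : Subgroup (Equiv.Perm (Fin k → ZMod n)) :=
  Subgroup.closure (Set.range (kGen (ZMod n) k))

/-- The diagonal generator `ĝ_i = (g_i^{(n)})_{n ≥ 1}` of `K̂_k` (with `n`-th coordinate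
indexed as `n + 1` so that all moduli `n + 1 ≥ 1` occur). -/
def ghat (k : ℕ) (i : Fin k) : ∀ n : ℕ, Equiv.Perm (Fin k → ZMod (n + 1)) :=
  fun n => kGen (ZMod (n + 1)) k i

/-- `K̂_k`: the subgroup of `∏_{n ≥ 1} Perm((ℤ/nℤ)^k)` generated by the diagonal
elements `ĝ_1, …, ĝ_k`. -/
def Khat (k : ℕ) : Subgroup (∀ n : ℕ, Equiv.Perm (Fin k → ZMod (n + 1))) :=
  Subgroup.closure (Set.range (ghat k))


open scoped commutatorElement

theorem Equiv.Perm.apply_inv_self {α : Type*} (f : Equiv.Perm α) (x : α) : f (f⁻¹ x) = x :=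
  Equiv.apply_symm_apply f x

/-- The subgroup of permutations of `Fin k → R` that fix the first `m` coordinates and
are "triangular shears": the change in coordinate `i` depends only on coordinates `< i`. -/
def fixShear (R : Type*) [AddCommGroup R] (k m : ℕ) :
    Subgroup (Equiv.Perm (Fin k → R)) where
  carrier := {σ | (∀ (v : Fin k → R) (i : Fin k), (i : ℕ) < m → σ v i = v i) ∧
      ∀ (v w : Fin k → R) (i : Fin k), (∀ j, j < i → v j = w j) →
        σ v i - v i = σ w i - w i}
  one_mem' := ⟨fun _ _ _ => rfl, fun _ _ _ _ => by simp⟩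
  mul_mem' := by
    rintro a b ⟨haf, has⟩ ⟨hbf, hbs⟩
    refine ⟨fun v i hi => ?_, fun v w i hvw => ?_⟩
    · show a (b v) i = v i
      rw [haf (b v) i hi, hbf v i hi]
    · have hb : ∀ j, j < i → b v j = b w j := by
        intro j hj
        have h1 := hbs v w j (fun l hl => hvw l (hl.trans hj))
        have h2 := hvw j hj
        have : v j - (v j - b v j) = w j - (w j - b w j) := by
          rw [show v j - b v j = -(b v j - v j) by abel,
            show w j - b w j = -(b w j - w j) by abel, h1, h2]
        simpa using this
      have h1 := has (b v) (b w) i hb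
      have h2 := hbs v w i hvw
      calc a (b v) i - v i = (a (b v) i - b v i) + (b v i - v i) := by abel
        _ = (a (b w) i - b w i) + (b w i - w i) := by rw [h1, h2]
        _ = a (b w) i - w i := by abel
  inv_mem' := by
    rintro a ⟨haf, has⟩
    refine ⟨fun v i hi => ?_, fun v w i hvw => ?_⟩
    · have := haf (a⁻¹ v) i hi
      rw [Equiv.Perm.apply_inv_self] at this
      exact this.symm
    · have agree : ∀ (n : ℕ) (j : Fin k), (j : ℕ) = n → j < i → a⁻¹ v j = a⁻¹ w j := by
        intro n
        induction n using Nat.strong_induction_on with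
        | _ n ih =>
          intro j hjn hji
          have below : ∀ l, l < j → a⁻¹ v l = a⁻¹ w l := fun l hl =>
            ih (l : ℕ) (hjn ▸ hl) l rfl (hl.trans hji)
          have h1 := has (a⁻¹ v) (a⁻¹ w) j below
          rw [Equiv.Perm.apply_inv_self, Equiv.Perm.apply_inv_self] at h1
          have h2 := hvw j hji
          have h3 : v j - (v j - a⁻¹ v j) = w j - (w j - a⁻¹ w j) := by rw [h1, h2]
          simpa using h3
      have h1 := has (a⁻¹ v) (a⁻¹ w) i (fun l hl => agree (l : ℕ) l rfl hl)
      rw [Equiv.Perm.apply_inv_self, Equiv.Perm.apply_inv_self] at h1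
      have : -(v i - a⁻¹ v i) = -(w i - a⁻¹ w i) := by rw [h1]
      simpa [neg_sub] using this

/-- Commutators descend the `fixShear` chain. -/
lemma commutator_mem_fixShear {R : Type*} [AddCommGroup R] {k m : ℕ}
    {x y : Equiv.Perm (Fin k → R)} (hx : x ∈ fixShear R k m) (hy : y ∈ fixShear R k m) :
    ⁅x, y⁆ ∈ fixShear R k (m + 1) := by
  have hx' : x⁻¹ ∈ fixShear R k m := (fixShear R k m).inv_mem hx
  have hy' : y⁻¹ ∈ fixShear R k m := (fixShear R k m).inv_mem hy
  have hmem : ⁅x, y⁆ ∈ fixShear R k m := by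
    rw [commutatorElement_def]
    exact mul_mem (mul_mem (mul_mem hx hy) hx') hy'
  refine ⟨fun v i hi => ?_, hmem.2⟩
  rcases Nat.lt_succ_iff_lt_or_eq.mp hi with h | h
  · exact hmem.1 v i h
  · -- i = m : the commutator is trivial at coordinate i
    have lt : ∀ j : Fin k, j < i → (j : ℕ) < m := fun j hj => h ▸ hj
    have a1 : ∀ j, j < i → (y⁻¹ v) j = v j := fun j hj => hy'.1 v j (lt j hj)
    have a2 : ∀ j, j < i → (x⁻¹ (y⁻¹ v)) j = (y⁻¹ v) j := fun j hj => hx'.1 _ j (lt j hj)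
    have a3 : ∀ j, j < i → (y (x⁻¹ (y⁻¹ v))) j = (x⁻¹ (y⁻¹ v)) j :=
      fun j hj => hy.1 _ j (lt j hj)
    have hsx := hx.2 (y (x⁻¹ (y⁻¹ v))) (x⁻¹ (y⁻¹ v)) i (fun j hj => a3 j hj)
    have hsy := hy.2 (x⁻¹ (y⁻¹ v)) (y⁻¹ v) i (fun j hj => a2 j hj)
    rw [Equiv.Perm.apply_inv_self] at hsx hsy
    -- hsx : x (y (x⁻¹ (y⁻¹ v))) i - y (x⁻¹ (y⁻¹ v)) i = y⁻¹ v i - x⁻¹ (y⁻¹ v) i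
    -- hsy : y (x⁻¹ (y⁻¹ v)) i - x⁻¹ (y⁻¹ v) i = v i - y⁻¹ v i
    show x (y (x⁻¹ (y⁻¹ v))) i = v i
    have e3 : y (x⁻¹ (y⁻¹ v)) i = (v i - y⁻¹ v i) + x⁻¹ (y⁻¹ v) i := by
      rw [← hsy]; abel
    calc x (y (x⁻¹ (y⁻¹ v))) i
        = (y⁻¹ v i - x⁻¹ (y⁻¹ v) i) + y (x⁻¹ (y⁻¹ v)) i := by rw [← hsx]; abel
      _ = (y⁻¹ v i - x⁻¹ (y⁻¹ v) i) + ((v i - y⁻¹ v i) + x⁻¹ (y⁻¹ v) i) := by rw [e3]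
      _ = v i := by abel

lemma fixShear_self_eq_bot (R : Type*) [AddCommGroup R] (k : ℕ) :
    fixShear R k k = ⊥ := by
  rw [eq_bot_iff]
  intro σ hσ
  rw [Subgroup.mem_bot]
  apply Equiv.ext
  intro v
  rw [Equiv.Perm.one_apply]
  funext i
  exact hσ.1 v i i.isLt

lemma kGen_mem_fixShear (R : Type*) [AddCommGroup R] [One R] [DecidableEq R] (k : ℕ)
    (i0 : Fin k) : kGen R k i0 ∈ fixShear R k 0 := by
  refine ⟨fun v i hi => absurd hi (Nat.not_lt_zero _), fun v w i hvw => ?_⟩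
  have key : ∀ u : Fin k → R,
      kGen R k i0 u i - u i = if (∀ j, j < i0 → u j = 0) ∧ i = i0 then (1 : R) else 0 := by
    intro u
    show (if ∀ j, j < i0 → u j = 0 then (fun j => u j + if j = i0 then 1 else 0) else u) i
        - u i = _
    by_cases h : ∀ j, j < i0 → u j = 0
    · rw [if_pos h]
      by_cases hi : i = i0
      · rw [if_pos hi, if_pos ⟨h, hi⟩]; simp
      · rw [if_neg hi, if_neg (fun hc => hi hc.2)]; simp
    · rw [if_neg h, if_neg (fun hc => h hc.1)]
      simp
  rw [key v, key w]
  by_cases hi : i = i0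
  · subst hi
    have : (∀ j, j < i → v j = 0) ↔ (∀ j, j < i → w j = 0) := by
      constructor <;> intro h j hj
      · rw [← hvw j hj]; exact h j hj
      · rw [hvw j hj]; exact h j hj
    simp [this]
  · simp [hi]

/-- Abstract chain argument: if `G ≤ H 0` and commutators descend the chain `H`,
then the image of the derived series of `G` lies in the chain. -/
lemma derivedSeries_map_le_chain {P : Type*} [Group P] (H : ℕ → Subgroup P)
    (hcomm : ∀ m, ∀ x ∈ H m, ∀ y ∈ H m, ⁅x, y⁆ ∈ H (m + 1))
    (G : Subgroup P) (hG : G ≤ H 0) :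
    ∀ n, (derivedSeries G n).map G.subtype ≤ H n := by
  intro n
  induction n with
  | zero =>
    rw [derivedSeries_zero, ← MonoidHom.range_eq_map, Subgroup.range_subtype]
    exact hG
  | succ n ih =>
    rw [derivedSeries_succ, Subgroup.map_commutator]
    exact Subgroup.commutator_le.mpr (fun x hx y hy => hcomm n x (ih hx) y (ih hy))

lemma derivedSeries_eq_bot_of_chain {P : Type*} [Group P] (H : ℕ → Subgroup P) (k : ℕ)
    (hcomm : ∀ m, ∀ x ∈ H m, ∀ y ∈ H m, ⁅x, y⁆ ∈ H (m + 1))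
    (G : Subgroup P) (hG : G ≤ H 0) (hbot : H k = ⊥) :
    derivedSeries G k = ⊥ := by
  have h := derivedSeries_map_le_chain H hcomm G hG k
  rw [hbot, le_bot_iff] at h
  exact (Subgroup.map_eq_bot_iff_of_injective _ (Subgroup.subtype_injective _)).mp h

/-- For every `k ≥ 1`, both `K_k` and `K̂_k` are solvable of derived
length at most `k`. -/
theorem Kk_Khat_solvable (k : ℕ) (hk : 1 ≤ k) :
    derivedSeries (Kk k) k = ⊥ ∧ derivedSeries (Khat k) k = ⊥ := by
  constructor
  · refine derivedSeries_eq_bot_of_chain (fun m => fixShear ℤ k m) k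
      (fun m x hx y hy => commutator_mem_fixShear hx hy) (Kk k) ?_ (fixShear_self_eq_bot ℤ k)
    rw [Kk, Subgroup.closure_le]
    rintro _ ⟨i, rfl⟩
    exact kGen_mem_fixShear ℤ k i
  · refine derivedSeries_eq_bot_of_chain
      (fun m => Subgroup.pi Set.univ (fun n => fixShear (ZMod (n + 1)) k m)) k
      (fun m x hx y hy => ?_) (Khat k) ?_ ?_
    · rw [Subgroup.mem_pi] at hx hy ⊢
      intro n _
      exact commutator_mem_fixShear (hx n trivial) (hy n trivial)
    · rw [Khat, Subgroup.closure_le]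
      rintro _ ⟨i, rfl⟩
      refine (Subgroup.mem_pi _).mpr (fun n _ => ?_)
      exact kGen_mem_fixShear (ZMod (n + 1)) k i
    · rw [eq_bot_iff]
      intro x hx
      rw [Subgroup.mem_bot]
      funext n
      have h := (Subgroup.mem_pi _).mp hx n trivial
      rw [fixShear_self_eq_bot, Subgroup.mem_bot] at h
      exact h
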